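/- Let X be a real N×d matrix of rank r with singular values σ_1 ≥ ... ≥ σ_r > 0, let k ≤ r, and let δ ∈ (0,1). Sample s column indices i_1,...,i_s i.i.d. from the length-squared distribution p_i = ‖X_{:i}‖² / ‖X‖_Fr² on {1,...,d}, and let S = {i_1,...,i_s}. Let 𝓛_k(S) = min{ ‖X − X_{:S} B‖_Fr² : B ∈ ℝ^{|S|×d}, rank(B) ≤ k }. Then with probability at least 1 − δ, 𝓛_k(S) ≤ Σ_{j=k+1}^{r} σ_j² + 2 ( 1 + √(8 log(2/δ)) ) √(k/s) · ‖X‖_Fr². -/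

import Mathlib

open Matrix Finset
open scoped Classical
noncomputable section

/-- Squared Frobenius norm. -/
def frobSq {N d : ℕ} (M : Matrix (Fin N) (Fin d) ℝ) : ℝ :=
  ∑ i, ∑ j, M i j ^ 2

/-- `𝓛_k(S) = min{ ‖X − X_{:S}B‖_Fr² : B ∈ ℝ^{|S|×d}, rank B ≤ k }`. -/
def lossK {N d : ℕ} (X : Matrix (Fin N) (Fin d) ℝ) (k : ℕ) (S : Finset (Fin d)) : ℝ :=
  sInf {e : ℝ | ∃ B : Matrix ↥S (Fin d) ℝ, B.rank ≤ k ∧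
    e = frobSq (X - (X.submatrix id (fun t : S => (t : Fin d))) * B)}

namespace DFKVV


variable {N d : ℕ}

lemma frobSq_nonneg (M : Matrix (Fin N) (Fin d) ℝ) : 0 ≤ frobSq M :=
  Finset.sum_nonneg fun _ _ => Finset.sum_nonneg fun _ _ => sq_nonneg _

lemma lossK_bddBelow (X : Matrix (Fin N) (Fin d) ℝ) (k : ℕ) (S : Finset (Fin d)) :
    BddBelow {e : ℝ | ∃ B : Matrix ↥S (Fin d) ℝ, B.rank ≤ k ∧
      e = frobSq (X - (X.submatrix id (fun t : S => (t : Fin d))) * B)} := by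
  refine ⟨0, fun e he => ?_⟩
  obtain ⟨B, _, rfl⟩ := he
  exact frobSq_nonneg _

lemma lossK_le (X : Matrix (Fin N) (Fin d) ℝ) (k : ℕ) (S : Finset (Fin d))
    (B : Matrix ↥S (Fin d) ℝ) (hB : B.rank ≤ k) :
    lossK X k S ≤ frobSq (X - (X.submatrix id (fun t : S => (t : Fin d))) * B) :=
  csInf_le (lossK_bddBelow X k S) ⟨B, hB, rfl⟩

lemma lossK_le_frobSq (X : Matrix (Fin N) (Fin d) ℝ) (k : ℕ) (S : Finset (Fin d)) :
    lossK X k S ≤ frobSq X := by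
  have h := lossK_le X k S 0 (by simp [Matrix.rank_zero])
  simpa using h



lemma vv_sum (v : Fin d → Fin d → ℝ)
    (hv_orth : ∀ i j, v i ⬝ᵥ v j = if i = j then (1 : ℝ) else 0) (c c' : Fin d) :
    ∑ j, v j c * v j c' = if c = c' then (1 : ℝ) else 0 := by
  have hQ : (Matrix.of v) * (Matrix.of v)ᵀ = 1 := by
    ext i j
    simpa [Matrix.mul_apply, Matrix.one_apply, dotProduct] using hv_orth i j
  have hQ' : (Matrix.of v)ᵀ * (Matrix.of v) = 1 := mul_eq_one_comm.mp hQ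
  have := congrFun (congrFun hQ' c) c'
  simpa [Matrix.mul_apply, Matrix.one_apply] using this

lemma row_parseval (v : Fin d → Fin d → ℝ)
    (hv_orth : ∀ i j, v i ⬝ᵥ v j = if i = j then (1 : ℝ) else 0) (w : Fin d → ℝ) :
    ∑ j, (∑ c, w c * v j c) ^ 2 = ∑ c, w c ^ 2 := by
  have expand : ∀ j : Fin d, (∑ c, w c * v j c) ^ 2
      = ∑ c, ∑ c', (w c * v j c) * (w c' * v j c') := by
    intro j; rw [sq, Finset.sum_mul_sum]
  calc ∑ j, (∑ c, w c * v j c) ^ 2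
      = ∑ j, ∑ c, ∑ c', (w c * v j c) * (w c' * v j c') := by
        exact Finset.sum_congr rfl fun j _ => expand j
    _ = ∑ c, ∑ c', (w c * w c') * ∑ j, v j c * v j c' := by
        rw [Finset.sum_comm]
        refine Finset.sum_congr rfl fun c _ => ?_
        rw [Finset.sum_comm]
        refine Finset.sum_congr rfl fun c' _ => ?_
        rw [Finset.mul_sum]
        exact Finset.sum_congr rfl fun j _ => by ring
    _ = ∑ c, w c ^ 2 := by
        refine Finset.sum_congr rfl fun c _ => ?_
        rw [Finset.sum_congr rfl (fun c' _ => by rw [vv_sum v hv_orth c c'])]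
        simp only [mul_ite, mul_one, mul_zero, Finset.sum_ite_eq, Finset.mem_univ, if_true, sq]

lemma parseval (v : Fin d → Fin d → ℝ)
    (hv_orth : ∀ i j, v i ⬝ᵥ v j = if i = j then (1 : ℝ) else 0)
    (M : Matrix (Fin N) (Fin d) ℝ) :
    frobSq M = ∑ j, ∑ a, (M *ᵥ v j) a ^ 2 := by
  rw [Finset.sum_comm]
  refine Finset.sum_congr rfl fun a _ => ?_
  rw [← row_parseval v hv_orth (fun c => M a c)]
  refine Finset.sum_congr rfl fun j _ => ?_
  simp [Matrix.mulVec, dotProduct]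

lemma sq_norm_mulVec (X : Matrix (Fin N) (Fin d) ℝ) (σ : ℕ → ℝ) (v : Fin d → Fin d → ℝ)
    (hv_orth : ∀ i j, v i ⬝ᵥ v j = if i = j then (1 : ℝ) else 0)
    (hv_eig : ∀ j : Fin d, (Xᵀ * X) *ᵥ v j = (σ (j : ℕ) ^ 2) • v j) (j : Fin d) :
    ∑ a, (X *ᵥ v j) a ^ 2 = σ (j : ℕ) ^ 2 := by
  have h1 : v j ⬝ᵥ ((Xᵀ * X) *ᵥ v j) = σ (j : ℕ) ^ 2 := by
    rw [hv_eig j, dotProduct_smul]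
    simp [hv_orth j j]
  have h2 : v j ⬝ᵥ ((Xᵀ * X) *ᵥ v j) = (X *ᵥ v j) ⬝ᵥ (X *ᵥ v j) := by
    rw [← Matrix.mulVec_mulVec, Matrix.dotProduct_mulVec, Matrix.vecMul_transpose]
  rw [← h1, h2]
  simp [dotProduct, sq]



/-- total mass factorizes -/
lemma sum_prod_p {n : ℕ} (p : Fin d → ℝ) (hq1 : ∑ i, p i = 1) :
    ∑ α : Fin n → Fin d, ∏ t, p (α t) = 1 := by
  rw [← Fintype.prod_sum (fun (_ : Fin n) (i : Fin d) => p i)]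
  simp [hq1]

/-- one-point marginal -/
lemma marg_one {n : ℕ} (p : Fin d → ℝ) (hq1 : ∑ i, p i = 1) (t0 : Fin n) (F : Fin d → ℝ) :
    ∑ α : Fin n → Fin d, (∏ t, p (α t)) * F (α t0) = ∑ i, p i * F i := by
  have key : ∀ α : Fin n → Fin d,
      (∏ t, p (α t)) * F (α t0) = ∏ t, (p (α t) * (if t = t0 then F (α t) else 1)) := by
    intro α
    rw [Finset.prod_mul_distrib]
    congr 1
    rw [Finset.prod_ite_eq' Finset.univ t0 (fun t => F (α t))]
    simp
  rw [Finset.sum_congr rfl fun α _ => key α,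
    ← Fintype.prod_sum (fun (t : Fin n) (i : Fin d) => p i * (if t = t0 then F i else 1))]
  have : ∀ t : Fin n, (∑ i, p i * (if t = t0 then F i else 1))
      = if t = t0 then ∑ i, p i * F i else 1 := by
    intro t; split_ifs with h <;> simp [hq1]
  rw [Finset.prod_congr rfl fun t _ => this t]
  rw [Finset.prod_ite_eq' Finset.univ t0 (fun _ => ∑ i, p i * F i)]
  simp

/-- two-point marginal -/
lemma marg_two {n : ℕ} (p : Fin d → ℝ) (hq1 : ∑ i, p i = 1) {t0 t1 : Fin n} (h01 : t0 ≠ t1)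
    (F G : Fin d → ℝ) :
    ∑ α : Fin n → Fin d, (∏ t, p (α t)) * (F (α t0) * G (α t1))
      = (∑ i, p i * F i) * (∑ i, p i * G i) := by
  have key : ∀ α : Fin n → Fin d,
      (∏ t, p (α t)) * (F (α t0) * G (α t1))
        = ∏ t, (p (α t) * ((if t = t0 then F (α t) else 1) * (if t = t1 then G (α t) else 1))) := by
    intro α
    rw [Finset.prod_mul_distrib, Finset.prod_mul_distrib]
    congr 1
    rw [Finset.prod_ite_eq' Finset.univ t0 (fun t => F (α t)),
      Finset.prod_ite_eq' Finset.univ t1 (fun t => G (α t))]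
    simp
  rw [Finset.sum_congr rfl fun α _ => key α,
    ← Fintype.prod_sum (fun (t : Fin n) (i : Fin d) =>
      p i * ((if t = t0 then F i else 1) * (if t = t1 then G i else 1)))]
  have : ∀ t : Fin n, (∑ i, p i * ((if t = t0 then F i else 1) * (if t = t1 then G i else 1)))
      = (if t = t0 then ∑ i, p i * F i else 1) * (if t = t1 then ∑ i, p i * G i else 1) := by
    intro t
    rcases eq_or_ne t t0 with rfl | h0
    · simp [h01]
    · rcases eq_or_ne t t1 with rfl | h1
      · simp [h0, hq1]
      · simp [h0, h1, hq1]
  rw [Finset.prod_congr rfl fun t _ => this t, Finset.prod_mul_distrib,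
    Finset.prod_ite_eq' Finset.univ t0 (fun _ => ∑ i, p i * F i),
    Finset.prod_ite_eq' Finset.univ t1 (fun _ => ∑ i, p i * G i)]
  simp

/-- Markov inequality on a fintype. -/
lemma markov {A : Type*} [Fintype A] (w G : A → ℝ) (hw : ∀ x, 0 ≤ w x) (hG : ∀ x, 0 ≤ G x)
    {c : ℝ} (hc : 0 < c) :
    ∑ x ∈ Finset.univ.filter (fun x => ¬ G x ≤ c), w x ≤ (∑ x, w x * G x) / c := by
  rw [div_eq_mul_inv]
  have step : ∀ x ∈ Finset.univ.filter (fun x => ¬ G x ≤ c), w x ≤ w x * G x * c⁻¹ := by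
    intro x hx
    rw [Finset.mem_filter] at hx
    have hGx : c ≤ G x := le_of_lt (lt_of_not_ge hx.2)
    calc w x = w x * c * c⁻¹ := by field_simp
      _ ≤ w x * G x * c⁻¹ := by
          apply mul_le_mul_of_nonneg_right _ (inv_nonneg.mpr hc.le)
          exact mul_le_mul_of_nonneg_left hGx (hw x)
  calc ∑ x ∈ Finset.univ.filter (fun x => ¬ G x ≤ c), w x
      ≤ ∑ x ∈ Finset.univ.filter (fun x => ¬ G x ≤ c), w x * G x * c⁻¹ :=
        Finset.sum_le_sum step
    _ ≤ ∑ x, w x * G x * c⁻¹ := by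
        apply Finset.sum_le_sum_of_subset_of_nonneg (Finset.filter_subset _ _)
        intro x _ _
        exact mul_nonneg (mul_nonneg (hw x) (hG x)) (inv_nonneg.mpr hc.le)
    _ = (∑ x, w x * G x) * c⁻¹ := by rw [Finset.sum_mul]

/-- the importance-sampling estimator column: `colf j i = (p i)⁻¹ v_j(i) • X_{:i}` -/
def colf (X : Matrix (Fin N) (Fin d) ℝ) (p : Fin d → ℝ) (v : Fin d → Fin d → ℝ)
    (j i : Fin d) : Fin N → ℝ := fun a => (p i)⁻¹ * v j i * X a i

/-- deviation statistic for a block of samples -/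
def devG {n : ℕ} (X : Matrix (Fin N) (Fin d) ℝ) (p : Fin d → ℝ) (v : Fin d → Fin d → ℝ)
    (k : ℕ) (α : Fin n → Fin d) : ℝ :=
  ∑ j ∈ Finset.univ.filter (fun j : Fin d => (j : ℕ) < k),
    ∑ a, ((X *ᵥ v j) a - (n : ℝ)⁻¹ * ∑ t, colf X p v j (α t) a) ^ 2

lemma devG_nonneg {n : ℕ} (X : Matrix (Fin N) (Fin d) ℝ) (p : Fin d → ℝ)
    (v : Fin d → Fin d → ℝ) (k : ℕ) (α : Fin n → Fin d) : 0 ≤ devG X p v k α :=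
  Finset.sum_nonneg fun _ _ => Finset.sum_nonneg fun _ _ => sq_nonneg _

/-- Main deterministic lemma: the loss is at most tail + deviation of any sub-block. -/
lemma loss_le_tail_add_devG {s n : ℕ} (X : Matrix (Fin N) (Fin d) ℝ) (k r : ℕ)
    (σ : ℕ → ℝ) (v : Fin d → Fin d → ℝ) (p : Fin d → ℝ)
    (hv_orth : ∀ i j, v i ⬝ᵥ v j = if i = j then (1 : ℝ) else 0)
    (hv_eig : ∀ j : Fin d, (Xᵀ * X) *ᵥ v j = (σ (j : ℕ) ^ 2) • v j)
    (hσ_zero : ∀ j : ℕ, r ≤ j → σ j = 0)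
    (hkd : k ≤ d) (hrd : r ≤ d) (hkr : k ≤ r)
    (ω : Fin s → Fin d) (τ : Fin n → Fin s) :
    lossK X k (Finset.image ω Finset.univ)
      ≤ (∑ j ∈ Finset.Ico k r, σ j ^ 2) + devG X p v k (ω ∘ τ) := by
  set S := Finset.image ω Finset.univ with hS
  set α : Fin n → Fin d := ω ∘ τ with hα
  -- the estimator vectors
  set yhat : Fin d → Fin N → ℝ :=
    fun j a => (n : ℝ)⁻¹ * ∑ t, colf X p v j (α t) a with hyhat
  -- coefficient vectors
  set cvec : Fin d → ↥S → ℝ := fun j i =>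
    (n : ℝ)⁻¹ * ((Finset.univ.filter (fun t : Fin n => α t = (i : Fin d))).card : ℝ)
      * ((p (i : Fin d))⁻¹ * v j (i : Fin d)) with hcvec
  have hmem : ∀ t : Fin n, α t ∈ S := by
    intro t; exact Finset.mem_image.mpr ⟨τ t, Finset.mem_univ _, rfl⟩
  -- yhat is a combination of the sampled columns
  have key : ∀ (j : Fin d) (a : Fin N), (∑ i : ↥S, X a (i : Fin d) * cvec j i) = yhat j a := by
    intro j a
    rw [hyhat]
    have fib : ∑ t : Fin n, ((p (α t))⁻¹ * v j (α t) * X a (α t))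
        = ∑ i ∈ S, ∑ t ∈ Finset.univ.filter (fun t : Fin n => α t = i),
            ((p (α t))⁻¹ * v j (α t) * X a (α t)) := by
      rw [Finset.sum_fiberwise_of_maps_to (fun t _ => hmem t)]
    have inner : ∀ i ∈ S, ∑ t ∈ Finset.univ.filter (fun t : Fin n => α t = i),
        ((p (α t))⁻¹ * v j (α t) * X a (α t))
        = ((Finset.univ.filter (fun t : Fin n => α t = i)).card : ℝ)
            * ((p i)⁻¹ * v j i * X a i) := by
      intro i _
      rw [Finset.sum_congr rfl (fun t ht => by
        rw [(Finset.mem_filter.mp ht).2])]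
      rw [Finset.sum_const, nsmul_eq_mul]
    have : ∑ i : ↥S, X a (i : Fin d) * cvec j i
        = (n : ℝ)⁻¹ * ∑ i ∈ S, ((Finset.univ.filter (fun t : Fin n => α t = i)).card : ℝ)
            * ((p i)⁻¹ * v j i * X a i) := by
      rw [Finset.mul_sum]
      rw [← Finset.sum_coe_sort S (fun i => (n:ℝ)⁻¹
        * (((Finset.univ.filter (fun t : Fin n => α t = i)).card : ℝ)
          * ((p i)⁻¹ * v j i * X a i)))]
      refine Finset.sum_congr rfl fun i _ => ?_
      rw [hcvec]; ring
    have inner' : ∑ i ∈ S, ((Finset.univ.filter (fun t : Fin n => α t = i)).card : ℝ)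
            * ((p i)⁻¹ * v j i * X a i)
        = ∑ i ∈ S, ∑ t ∈ Finset.univ.filter (fun t : Fin n => α t = i),
            ((p (α t))⁻¹ * v j (α t) * X a (α t)) :=
      Finset.sum_congr rfl fun i hi => (inner i hi).symm
    rw [this, inner', ← fib, Finset.mul_sum]
    simp [colf, Finset.mul_sum]
  -- the rank-≤k coefficient matrix
  set C : Matrix ↥S (Fin k) ℝ := Matrix.of (fun i jk => cvec (Fin.castLE hkd jk) i) with hC
  set W : Matrix (Fin k) (Fin d) ℝ := Matrix.of (fun jk c => v (Fin.castLE hkd jk) c) with hW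
  set B : Matrix ↥S (Fin d) ℝ := C * W with hB
  have hrank : B.rank ≤ k := by
    calc B.rank ≤ C.rank := Matrix.rank_mul_le_left C W
      _ ≤ Fintype.card (Fin k) := Matrix.rank_le_card_width C
      _ = k := Fintype.card_fin k
  refine le_trans (lossK_le X k S B hrank) (le_of_eq ?_)
  -- compute the product matrix
  have prodmat : ∀ (a : Fin N) (c : Fin d),
      ((X.submatrix id (fun t : S => (t : Fin d))) * B) a c
        = ∑ jk : Fin k, yhat (Fin.castLE hkd jk) a * v (Fin.castLE hkd jk) c := by
    intro a c
    rw [hB, ← Matrix.mul_assoc]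
    rw [Matrix.mul_apply]
    refine Finset.sum_congr rfl fun jk _ => ?_
    rw [Matrix.mul_apply]
    have : ∑ i : ↥S, (X.submatrix id (fun t : S => (t : Fin d))) a i * C i jk
        = yhat (Fin.castLE hkd jk) a := by
      rw [← key (Fin.castLE hkd jk) a]
      rfl
    rw [this]; rfl
  -- mulVec of the residual against v j'
  have resid : ∀ j' : Fin d,
      ((X - (X.submatrix id (fun t : S => (t : Fin d))) * B) *ᵥ v j')
        = fun a => (X *ᵥ v j') a - (if (j' : ℕ) < k then yhat j' a else 0) := by
    intro j'
    funext a
    rw [Matrix.sub_mulVec]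
    have : (((X.submatrix id (fun t : S => (t : Fin d))) * B) *ᵥ v j') a
        = if (j' : ℕ) < k then yhat j' a else 0 := by
      have expand : (((X.submatrix id (fun t : S => (t : Fin d))) * B) *ᵥ v j') a
          = ∑ jk : Fin k, yhat (Fin.castLE hkd jk) a
              * (if Fin.castLE hkd jk = j' then (1:ℝ) else 0) := by
        rw [Matrix.mulVec, dotProduct]
        rw [Finset.sum_congr rfl (fun c _ => by rw [prodmat a c])]
        rw [Finset.sum_congr rfl (fun c (_ : c ∈ Finset.univ) =>
          Finset.sum_mul Finset.univ (fun jk => yhat (Fin.castLE hkd jk) a * v (Fin.castLE hkd jk) c) (v j' c))]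
        rw [Finset.sum_comm]
        refine Finset.sum_congr rfl fun jk _ => ?_
        rw [← hv_orth (Fin.castLE hkd jk) j']
        rw [dotProduct, Finset.mul_sum]
        exact Finset.sum_congr rfl fun c _ => by ring
      rw [expand]
      by_cases h : (j' : ℕ) < k
      · have hj0 : Fin.castLE hkd (⟨(j' : ℕ), h⟩ : Fin k) = j' := by
          ext; simp
        rw [if_pos h]
        rw [Finset.sum_eq_single (⟨(j' : ℕ), h⟩ : Fin k)]
        · rw [hj0, if_pos rfl, mul_one]
        · intro jk _ hne
          rw [if_neg, mul_zero]
          intro hh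
          apply hne
          apply Fin.ext
          have := congrArg Fin.val hh
          simpa using this
        · intro hh; exact absurd (Finset.mem_univ _) hh
      · rw [if_neg h]
        apply Finset.sum_eq_zero
        intro jk _
        rw [if_neg, mul_zero]
        intro hh
        exact h (hh ▸ (Fin.castLE hkd jk).isLt |> fun _ => by
          have : ((Fin.castLE hkd jk : Fin d) : ℕ) = (jk : ℕ) := rfl
          omega)
    rw [Pi.sub_apply, this]
  -- now Parseval
  rw [parseval v hv_orth]
  rw [Finset.sum_congr rfl (fun j' _ => by rw [resid j'])]
  have split := Finset.sum_filter_add_sum_filter_not Finset.univ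
    (fun j' : Fin d => (j' : ℕ) < k)
    (fun j' : Fin d => ∑ a, ((X *ᵥ v j') a - (if (j' : ℕ) < k then yhat j' a else 0)) ^ 2)
  rw [← split]
  have part1 : ∑ j' ∈ Finset.univ.filter (fun j' : Fin d => (j' : ℕ) < k),
      (∑ a, ((X *ᵥ v j') a - (if (j' : ℕ) < k then yhat j' a else 0)) ^ 2)
      = devG X p v k α := by
    rw [devG]
    refine Finset.sum_congr rfl fun j' hj' => ?_
    have h := (Finset.mem_filter.mp hj').2
    refine Finset.sum_congr rfl fun a _ => ?_
    rw [if_pos h]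
  have part2 : ∑ j' ∈ Finset.univ.filter (fun j' : Fin d => ¬ (j' : ℕ) < k),
      (∑ a, ((X *ᵥ v j') a - (if (j' : ℕ) < k then yhat j' a else 0)) ^ 2)
      = ∑ j ∈ Finset.Ico k r, σ j ^ 2 := by
    have e1 : ∀ j' ∈ Finset.univ.filter (fun j' : Fin d => ¬ (j' : ℕ) < k),
        (∑ a, ((X *ᵥ v j') a - (if (j' : ℕ) < k then yhat j' a else 0)) ^ 2)
          = σ (j' : ℕ) ^ 2 := by
      intro j' hj'
      have h := (Finset.mem_filter.mp hj').2
      rw [Finset.sum_congr rfl (fun a _ => by rw [if_neg h, sub_zero])]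
      exact sq_norm_mulVec X σ v hv_orth hv_eig j'
    rw [Finset.sum_congr rfl e1]
    -- transfer to a range sum
    rw [Finset.sum_filter]
    rw [Fin.sum_univ_eq_sum_range (fun j => if ¬ j < k then σ j ^ 2 else 0) d]
    rw [← Finset.sum_filter]
    have : (Finset.range d).filter (fun j => ¬ j < k) = Finset.Ico k d := by
      ext j; simp [Finset.mem_Ico]; omega
    rw [this]
    rw [← Finset.sum_Ico_consecutive (fun j => σ j ^ 2) hkr hrd]
    have : ∑ j ∈ Finset.Ico r d, σ j ^ 2 = 0 := by
      apply Finset.sum_eq_zero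
      intro j hj
      rw [hσ_zero j (Finset.mem_Ico.mp hj).1]
      ring
    rw [this, add_zero]
  rw [part1, part2, add_comm]



variable (X : Matrix (Fin N) (Fin d) ℝ) (p : Fin d → ℝ)

lemma p_nonneg (hF : 0 < frobSq X) (hp : ∀ i, p i = (∑ a, X a i ^ 2) / frobSq X) (i : Fin d) : 0 ≤ p i := by
  rw [hp i]
  exact div_nonneg (Finset.sum_nonneg fun _ _ => sq_nonneg _) hF.le

lemma col_eq (hF : 0 < frobSq X) (hp : ∀ i, p i = (∑ a, X a i ^ 2) / frobSq X) (i : Fin d) : ∑ a, X a i ^ 2 = p i * frobSq X := by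
  rw [hp i, div_mul_cancel₀]
  exact hF.ne'

lemma p_sum_one (hF : 0 < frobSq X) (hp : ∀ i, p i = (∑ a, X a i ^ 2) / frobSq X) : ∑ i, p i = 1 := by
  rw [Finset.sum_congr rfl fun i (_ : i ∈ Finset.univ) => hp i, ← Finset.sum_div,
    Finset.sum_comm]
  exact div_self hF.ne'

lemma col_zero (hF : 0 < frobSq X) (hp : ∀ i, p i = (∑ a, X a i ^ 2) / frobSq X) {i : Fin d} (hpi : p i = 0) (a : Fin N) : X a i = 0 := by
  have h0 : ∑ a, X a i ^ 2 = 0 := by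
    rw [col_eq X p hF hp i, hpi, zero_mul]
  have := (Finset.sum_eq_zero_iff_of_nonneg (fun a _ => sq_nonneg (X a i))).mp h0 a
    (Finset.mem_univ a)
  exact pow_eq_zero_iff (n := 2) (by norm_num) |>.mp this

lemma mean_colf (hF : 0 < frobSq X) (hp : ∀ i, p i = (∑ a, X a i ^ 2) / frobSq X) (v : Fin d → Fin d → ℝ) (j : Fin d) (a : Fin N) :
    ∑ i, p i * colf X p v j i a = (X *ᵥ v j) a := by
  have : ∀ i : Fin d, p i * colf X p v j i a = X a i * v j i := by
    intro i
    by_cases hpi : p i = 0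
    · simp [colf, hpi, col_zero X p hF hp hpi a]
    · simp only [colf]
      rw [← mul_assoc, ← mul_assoc, mul_inv_cancel₀ hpi, one_mul, mul_comm]
  rw [Finset.sum_congr rfl fun i _ => this i]
  simp [Matrix.mulVec, dotProduct]


/-- expectation bound for the deviation statistic -/
lemma exp_devG {n : ℕ} (hn : 0 < n) (X : Matrix (Fin N) (Fin d) ℝ) (k : ℕ)
    (p : Fin d → ℝ) (v : Fin d → Fin d → ℝ)
    (hv_orth : ∀ i j, v i ⬝ᵥ v j = if i = j then (1 : ℝ) else 0)
    (hF : 0 < frobSq X) (hp : ∀ i, p i = (∑ a, X a i ^ 2) / frobSq X)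
    (hkd : k ≤ d) :
    ∑ α : Fin n → Fin d, (∏ t, p (α t)) * devG X p v k α
      ≤ (k : ℝ) * frobSq X / n := by
  have hq1 := p_sum_one X p hF hp
  have hp0 := p_nonneg X p hF hp
  -- reorder: sum over j first
  simp only [devG]
  rw [Finset.sum_congr rfl (fun (α : Fin n → Fin d) (_ : α ∈ Finset.univ) => Finset.mul_sum
    (Finset.univ.filter (fun j : Fin d => (j : ℕ) < k))
    (fun j => ∑ a, ((X *ᵥ v j) a - (n : ℝ)⁻¹ * ∑ t, colf X p v j (α t) a) ^ 2)
    (∏ t, p (α t))), Finset.sum_comm]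
  -- per-j bound
  have perj : ∀ j : Fin d,
      ∑ α : Fin n → Fin d, (∏ t, p (α t))
          * (∑ a, ((X *ᵥ v j) a - (n : ℝ)⁻¹ * ∑ t, colf X p v j (α t) a) ^ 2)
        ≤ frobSq X / n := by
    intro j
    set e : Fin d → Fin N → ℝ := fun i a => (X *ᵥ v j) a - colf X p v j i a with he
    have hmean0 : ∀ a, ∑ i, p i * e i a = 0 := by
      intro a
      have : ∑ i, p i * e i a
          = (∑ i, p i) * (X *ᵥ v j) a - ∑ i, p i * colf X p v j i a := by
        rw [Finset.sum_mul, ← Finset.sum_sub_distrib]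
        exact Finset.sum_congr rfl fun i _ => by rw [he]; ring
      rw [this, hq1, one_mul, mean_colf X p hF hp v j a, sub_self]
    set V : ℝ := ∑ a, ∑ i, p i * (e i a) ^ 2 with hV
    -- rewrite the inner deviation
    have inner_eq : ∀ (α : Fin n → Fin d) (a : Fin N),
        (X *ᵥ v j) a - (n : ℝ)⁻¹ * ∑ t, colf X p v j (α t) a
          = (n : ℝ)⁻¹ * ∑ t, e (α t) a := by
      intro α a
      rw [Finset.mul_sum, Finset.mul_sum]
      have hsub : ∀ t : Fin n, (n:ℝ)⁻¹ * e (α t) a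
          = (n:ℝ)⁻¹ * (X *ᵥ v j) a - (n:ℝ)⁻¹ * colf X p v j (α t) a := by
        intro t; rw [he]; ring
      rw [Finset.sum_congr rfl fun t (_ : t ∈ Finset.univ) => hsub t,
        Finset.sum_sub_distrib, Finset.sum_const, Finset.card_univ, Fintype.card_fin,
        nsmul_eq_mul]
      have hne : (n:ℝ) ≠ 0 := Nat.cast_ne_zero.mpr hn.ne'
      have : (n:ℝ) * ((n:ℝ)⁻¹ * (X *ᵥ v j) a) = (X *ᵥ v j) a := by field_simp
      rw [this]
    -- expectation of the product over pairs
    have hZ : ∀ (t t' : Fin n) (a : Fin N),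
        ∑ α : Fin n → Fin d, (∏ u, p (α u)) * (e (α t) a * e (α t') a)
          = if t = t' then ∑ i, p i * (e i a) ^ 2 else 0 := by
      intro t t' a
      by_cases h : t = t'
      · subst h
        rw [if_pos rfl, marg_one p hq1 t (fun i => e i a * e i a)]
        exact Finset.sum_congr rfl fun i _ => by rw [sq]
      · rw [if_neg h, marg_two p hq1 h (fun i => e i a) (fun i => e i a), hmean0 a, zero_mul]
    have shape : ∀ α : Fin n → Fin d,
        (∏ u, p (α u)) * ∑ a, ((X *ᵥ v j) a - (n : ℝ)⁻¹ * ∑ t, colf X p v j (α t) a) ^ 2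
          = ((n : ℝ)⁻¹) ^ 2 * ∑ a, ∑ t, ∑ t', (∏ u, p (α u)) * (e (α t) a * e (α t') a) := by
      intro α
      rw [Finset.sum_congr rfl fun a (_ : a ∈ Finset.univ) => by
        rw [inner_eq α a, mul_pow, sq (∑ t, e (α t) a), Finset.sum_mul_sum]]
      rw [← Finset.mul_sum]
      rw [← mul_assoc, mul_comm (∏ u, p (α u)) (((n:ℝ)⁻¹) ^ 2), mul_assoc]
      congr 1
      rw [Finset.mul_sum]
      refine Finset.sum_congr rfl fun a _ => ?_
      rw [Finset.mul_sum]
      refine Finset.sum_congr rfl fun t _ => ?_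
      rw [Finset.mul_sum]
    have swap3 : ∑ α : Fin n → Fin d, ∑ a, ∑ t, ∑ t', (∏ u, p (α u)) * (e (α t) a * e (α t') a)
        = ∑ a, ∑ t, ∑ t', ∑ α : Fin n → Fin d, (∏ u, p (α u)) * (e (α t) a * e (α t') a) := by
      rw [Finset.sum_comm]
      refine Finset.sum_congr rfl fun a _ => ?_
      rw [Finset.sum_comm]
      refine Finset.sum_congr rfl fun t _ => ?_
      rw [Finset.sum_comm]
    have diag : ∀ a : Fin N,
        ∑ t : Fin n, ∑ t', (if t = t' then ∑ i, p i * (e i a) ^ 2 else 0)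
          = (n : ℝ) * ∑ i, p i * (e i a) ^ 2 := by
      intro a
      rw [Finset.sum_congr rfl fun t (_ : t ∈ Finset.univ) =>
        Finset.sum_ite_eq Finset.univ t (fun _ => ∑ i, p i * (e i a) ^ 2)]
      simp [Finset.sum_const, Finset.card_univ, nsmul_eq_mul]
    have Tval : ∑ α : Fin n → Fin d, (∏ t, p (α t))
          * (∑ a, ((X *ᵥ v j) a - (n : ℝ)⁻¹ * ∑ t, colf X p v j (α t) a) ^ 2)
        = (n : ℝ)⁻¹ * V := by
      rw [Finset.sum_congr rfl fun α (_ : α ∈ Finset.univ) => shape α, ← Finset.mul_sum, swap3]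
      rw [Finset.sum_congr rfl fun a (_ : a ∈ Finset.univ) =>
        (Finset.sum_congr rfl fun t (_ : t ∈ Finset.univ) =>
          (Finset.sum_congr rfl fun t' (_ : t' ∈ Finset.univ) => hZ t t' a))]
      rw [Finset.sum_congr rfl fun a (_ : a ∈ Finset.univ) => diag a]
      rw [← Finset.mul_sum, hV]
      have hne : (n:ℝ) ≠ 0 := Nat.cast_ne_zero.mpr hn.ne'
      field_simp
    rw [Tval]
    -- bound the variance V
    have hpcolf : ∀ i : Fin d, ∑ a, p i * (colf X p v j i a) ^ 2 ≤ (v j i) ^ 2 * frobSq X := by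
      intro i
      by_cases hpi : p i = 0
      · simp only [hpi, zero_mul]
        rw [Finset.sum_const, smul_zero]
        exact mul_nonneg (sq_nonneg _) hF.le
      · have : ∀ a, p i * (colf X p v j i a) ^ 2
            = (p i)⁻¹ * (v j i) ^ 2 * (X a i) ^ 2 := by
          intro a
          simp only [colf]
          field_simp
        rw [Finset.sum_congr rfl fun a _ => this a, ← Finset.mul_sum,
          col_eq X p hF hp i]
        refine le_of_eq ?_
        field_simp
    have Vle : V ≤ frobSq X := by
      have pera : ∀ a : Fin N, ∑ i, p i * (e i a) ^ 2
          ≤ ∑ i, p i * (colf X p v j i a) ^ 2 := by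
        intro a
        have expand : ∑ i, p i * (e i a) ^ 2
            = ((X *ᵥ v j) a) ^ 2 * (∑ i, p i)
              - 2 * (X *ᵥ v j) a * (∑ i, p i * colf X p v j i a)
              + ∑ i, p i * (colf X p v j i a) ^ 2 := by
          rw [Finset.mul_sum, Finset.mul_sum, ← Finset.sum_sub_distrib,
            ← Finset.sum_add_distrib]
          refine Finset.sum_congr rfl fun i _ => ?_
          rw [he]
          ring
        rw [expand, hq1, mean_colf X p hF hp v j a]
        nlinarith [sq_nonneg ((X *ᵥ v j) a)]
      calc V ≤ ∑ a, ∑ i, p i * (colf X p v j i a) ^ 2 := by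
            rw [hV]; exact Finset.sum_le_sum fun a _ => pera a
        _ = ∑ i, ∑ a, p i * (colf X p v j i a) ^ 2 := Finset.sum_comm
        _ ≤ ∑ i, (v j i) ^ 2 * frobSq X := Finset.sum_le_sum fun i _ => hpcolf i
        _ = frobSq X := by
            rw [← Finset.sum_mul]
            have : ∑ i, (v j i) ^ 2 = 1 := by
              have := hv_orth j j
              rw [if_pos rfl] at this
              rw [← this, dotProduct]
              exact Finset.sum_congr rfl fun i _ => (sq (v j i))
            rw [this, one_mul]
    have hn' : (0:ℝ) < (n:ℝ) := Nat.cast_pos.mpr hn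
    calc (n : ℝ)⁻¹ * V ≤ (n : ℝ)⁻¹ * frobSq X := by
          exact mul_le_mul_of_nonneg_left Vle (inv_nonneg.mpr hn'.le)
      _ = frobSq X / n := by rw [div_eq_mul_inv]; ring
  -- sum over the k values of j
  have hcard : (Finset.univ.filter (fun j : Fin d => (j : ℕ) < k)).card = k := by
    have : Finset.univ.filter (fun j : Fin d => (j : ℕ) < k)
        = Finset.map (Fin.castLEEmb hkd) Finset.univ := by
      ext j
      constructor
      · intro hmem
        have h := (Finset.mem_filter.mp hmem).2
        refine Finset.mem_map.mpr ⟨⟨(j : ℕ), h⟩, Finset.mem_univ _, ?_⟩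
        apply Fin.ext
        simp [Fin.castLEEmb]
      · intro hmem
        obtain ⟨jk, _, rfl⟩ := Finset.mem_map.mp hmem
        refine Finset.mem_filter.mpr ⟨Finset.mem_univ _, ?_⟩
        simpa [Fin.castLEEmb] using jk.isLt
    rw [this, Finset.card_map, Finset.card_univ, Fintype.card_fin]
  calc ∑ j ∈ Finset.univ.filter (fun j : Fin d => (j : ℕ) < k),
        ∑ α : Fin n → Fin d, (∏ t, p (α t))
          * (∑ a, ((X *ᵥ v j) a - (n : ℝ)⁻¹ * ∑ t, colf X p v j (α t) a) ^ 2)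
      ≤ ∑ j ∈ Finset.univ.filter (fun j : Fin d => (j : ℕ) < k), frobSq X / n :=
        Finset.sum_le_sum fun j _ => perj j
    _ = (k : ℝ) * frobSq X / n := by
        rw [Finset.sum_const, hcard, nsmul_eq_mul, mul_div_assoc]

/-- independence across disjoint blocks of coordinates -/
lemma indep_blocks {m n l s : ℕ} (p : Fin d → ℝ) (hq1 : ∑ i, p i = 1)
    (e : Fin s ≃ (Fin m × Fin n) ⊕ Fin l) (H : (Fin n → Fin d) → ℝ) :
    ∑ ω : Fin s → Fin d, (∏ i, p (ω i)) * ∏ g : Fin m, H (fun t => ω (e.symm (Sum.inl (g, t))))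
      = (∑ α : Fin n → Fin d, (∏ t, p (α t)) * H α) ^ m := by
  set Ψ : ((Fin m × Fin n) ⊕ Fin l → Fin d) ≃ (Fin s → Fin d) :=
    Equiv.arrowCongr e.symm (Equiv.refl (Fin d)) with hΨ
  rw [← Equiv.sum_comp Ψ (fun ω : Fin s → Fin d =>
    (∏ i, p (ω i)) * ∏ g : Fin m, H (fun t => ω (e.symm (Sum.inl (g, t)))))]
  have hΨapp : ∀ (ψ : (Fin m × Fin n) ⊕ Fin l → Fin d) (i : Fin s), Ψ ψ i = ψ (e i) := by
    intro ψ i; simp [hΨ, Equiv.arrowCongr]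
  have step1 : ∀ ψ : (Fin m × Fin n) ⊕ Fin l → Fin d,
      (∏ i, p (Ψ ψ i)) * ∏ g : Fin m, H (fun t => Ψ ψ (e.symm (Sum.inl (g, t))))
        = (∏ g : Fin m, (∏ t, p (ψ (Sum.inl (g, t)))) * H (fun t => ψ (Sum.inl (g, t))))
          * ∏ j : Fin l, p (ψ (Sum.inr j)) := by
    intro ψ
    have h1 : ∏ i, p (Ψ ψ i) = ∏ x, p (ψ x) := by
      rw [Finset.prod_congr rfl fun i (_ : i ∈ Finset.univ) => by rw [hΨapp ψ i]]
      exact Equiv.prod_comp e (fun x => p (ψ x))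
    have h2 : ∏ x, p (ψ x)
        = (∏ g : Fin m, ∏ t, p (ψ (Sum.inl (g, t)))) * ∏ j : Fin l, p (ψ (Sum.inr j)) := by
      rw [Fintype.prod_sum_type]
      congr 1
      exact Fintype.prod_prod_type _
    have h3 : ∀ g t, Ψ ψ (e.symm (Sum.inl (g, t))) = ψ (Sum.inl (g, t)) := by
      intro g t; rw [hΨapp, Equiv.apply_symm_apply]
    rw [h1, h2]
    rw [Finset.prod_congr rfl fun g (_ : g ∈ Finset.univ) => show
      H (fun t => Ψ ψ (e.symm (Sum.inl (g, t)))) = H (fun t => ψ (Sum.inl (g, t))) by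
        congr 1; funext t; exact h3 g t]
    rw [Finset.prod_mul_distrib]
    ring
  rw [Finset.sum_congr rfl fun ψ (_ : ψ ∈ Finset.univ) => step1 ψ]
  -- split the function space into the two blocks
  set Θ : ((Fin m × Fin n → Fin d) × (Fin l → Fin d)) ≃ ((Fin m × Fin n) ⊕ Fin l → Fin d) :=
    (Equiv.sumArrowEquivProdArrow _ _ _).symm with hΘ
  rw [← Equiv.sum_comp Θ (fun ψ =>
    (∏ g : Fin m, (∏ t, p (ψ (Sum.inl (g, t)))) * H (fun t => ψ (Sum.inl (g, t))))
      * ∏ j : Fin l, p (ψ (Sum.inr j)))]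
  have hΘl : ∀ (uw : (Fin m × Fin n → Fin d) × (Fin l → Fin d)) (x : Fin m × Fin n),
      Θ uw (Sum.inl x) = uw.1 x := fun uw x => rfl
  have hΘr : ∀ (uw : (Fin m × Fin n → Fin d) × (Fin l → Fin d)) (j : Fin l),
      Θ uw (Sum.inr j) = uw.2 j := fun uw j => rfl
  rw [Finset.sum_congr rfl fun uw (_ : uw ∈ Finset.univ) => show
      (∏ g : Fin m, (∏ t, p (Θ uw (Sum.inl (g, t)))) * H (fun t => Θ uw (Sum.inl (g, t))))
        * ∏ j : Fin l, p (Θ uw (Sum.inr j))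
      = (∏ g : Fin m, (∏ t, p (uw.1 (g, t))) * H (fun t => uw.1 (g, t)))
        * ∏ j : Fin l, p (uw.2 j) by rfl]
  rw [Fintype.sum_prod_type]
  rw [Finset.sum_congr rfl fun u (_ : u ∈ Finset.univ) => show
    (∑ y : Fin l → Fin d,
        (∏ g : Fin m, (∏ t, p (u (g, t))) * H (fun t => u (g, t))) * ∏ j : Fin l, p (y j))
      = (∏ g : Fin m, (∏ t, p (u (g, t))) * H (fun t => u (g, t)))
          * ∑ y : Fin l → Fin d, ∏ j : Fin l, p (y j)
    from (Finset.mul_sum _ _ _).symm]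
  rw [← Finset.sum_mul, sum_prod_p p hq1, mul_one]
  -- curry the block variable
  set Γ : (Fin m → Fin n → Fin d) ≃ (Fin m × Fin n → Fin d) :=
    (Equiv.curry (Fin m) (Fin n) (Fin d)).symm with hΓ
  rw [← Equiv.sum_comp Γ (fun u : Fin m × Fin n → Fin d =>
    ∏ g : Fin m, (∏ t, p (u (g, t))) * H (fun t => u (g, t)))]
  have hΓapp : ∀ (β : Fin m → Fin n → Fin d) (g : Fin m) (t : Fin n),
      Γ β (g, t) = β g t := fun β g t => rfl
  rw [Finset.sum_congr rfl fun β (_ : β ∈ Finset.univ) => show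
      ∏ g : Fin m, (∏ t, p (Γ β (g, t))) * H (fun t => Γ β (g, t))
        = ∏ g : Fin m, (∏ t, p (β g t)) * H (β g) by rfl]
  rw [← Fintype.prod_sum (fun (_ : Fin m) (α : Fin n → Fin d) => (∏ t, p (α t)) * H α)]
  rw [Finset.prod_const, Finset.card_univ, Fintype.card_fin]


end DFKVV

open DFKVV

set_option maxHeartbeats 2000000 in
/-- **Length-squared importance sampling** (Drineas–Frieze–Kannan–Vempala–Vinay, Thm 3).
Sampling `s` column indices i.i.d. with probability proportional to squared column norms,
with probability at least `1 − δ`,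
`𝓛_k(S) ≤ ∑_{j>k} σ_j² + 2(1+√(8 log(2/δ)))√(k/s)·‖X‖_Fr²`. -/
theorem length_squared_sampling_bound {N d : ℕ} (X : Matrix (Fin N) (Fin d) ℝ)
    (r k : ℕ) (hr : 0 < r) (hk : k ≤ r) (hrank : X.rank = r)
    (σ : ℕ → ℝ) (v : Fin d → Fin d → ℝ)
    (hσ_anti : ∀ i j : ℕ, i ≤ j → σ j ≤ σ i)
    (hσ_pos : ∀ j : ℕ, j < r → 0 < σ j)
    (hσ_zero : ∀ j : ℕ, r ≤ j → σ j = 0)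
    (hv_orth : ∀ i j, v i ⬝ᵥ v j = if i = j then (1 : ℝ) else 0)
    (hv_eig : ∀ j : Fin d, (Xᵀ * X) *ᵥ v j = (σ (j : ℕ) ^ 2) • v j)
    (δ : ℝ) (hδ : δ ∈ Set.Ioo (0 : ℝ) 1)
    (s : ℕ) (hs : 0 < s)
    (p : Fin d → ℝ) (hp : ∀ i, p i = (∑ a, X a i ^ 2) / frobSq X) :
    (1 : ℝ) - δ ≤
      ∑ ω ∈ Finset.univ.filter (fun ω : Fin s → Fin d =>
          lossK X k (Finset.image ω Finset.univ)
            ≤ (∑ j ∈ Finset.Ico k r, σ j ^ 2) +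
              2 * (1 + Real.sqrt (8 * Real.log (2 / δ))) *
                Real.sqrt ((k : ℝ) / s) * frobSq X),
        ∏ i, p (ω i) := by
  classical
  obtain ⟨hδ0, hδ1⟩ := hδ
  -- positivity of the Frobenius norm
  have hF : 0 < frobSq X := by
    rcases (DFKVV.frobSq_nonneg X).lt_or_eq with h | h
    · exact h
    · exfalso
      have hX0 : X = 0 := by
        ext a i
        have h1 : ∑ a, ∑ i, X a i ^ 2 = 0 := h.symm
        have h2 := (Finset.sum_eq_zero_iff_of_nonneg
          (fun a (_ : a ∈ Finset.univ) => Finset.sum_nonneg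
            (fun i _ => sq_nonneg (X a i)))).mp h1 a (Finset.mem_univ a)
        have h3 := (Finset.sum_eq_zero_iff_of_nonneg
          (fun i (_ : i ∈ Finset.univ) => sq_nonneg (X a i))).mp h2 i (Finset.mem_univ i)
        simpa using pow_eq_zero_iff (n := 2) (by norm_num) |>.mp h3
      rw [hX0, Matrix.rank_zero] at hrank
      omega
  have hp0 : ∀ i, 0 ≤ p i := DFKVV.p_nonneg X p hF hp
  have hq1 : ∑ i, p i = 1 := DFKVV.p_sum_one X p hF hp
  have hrd : r ≤ d := hrank ▸ Matrix.rank_le_width X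
  have hkd : k ≤ d := hk.trans hrd
  set L := Real.log (2 / δ) with hLdef
  have hlog2 : (0.6931471803 : ℝ) < Real.log 2 := Real.log_two_gt_d9
  have hLlog2 : Real.log 2 ≤ L := by
    rw [hLdef]
    apply Real.log_le_log (by norm_num)
    rw [le_div_iff₀ hδ0]; linarith
  have hL0 : 0 < L := lt_of_lt_of_le (by linarith) hLlog2
  set W := 1 + Real.sqrt (8 * L) with hWdef
  have hsq8 : Real.sqrt (8 * L) ^ 2 = 8 * L := Real.sq_sqrt (by positivity)
  have hW1 : (1:ℝ) ≤ W := by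
    rw [hWdef]; linarith [Real.sqrt_nonneg (8 * L)]
  have hW0 : (0:ℝ) < W := by linarith
  set bound := (∑ j ∈ Finset.Ico k r, σ j ^ 2)
      + 2 * W * Real.sqrt ((k : ℝ) / s) * frobSq X with hbound
  have htail0 : 0 ≤ ∑ j ∈ Finset.Ico k r, σ j ^ 2 :=
    Finset.sum_nonneg fun j _ => sq_nonneg _
  have hsqrt0 : 0 ≤ Real.sqrt ((k : ℝ) / s) := Real.sqrt_nonneg _
  suffices hbad : ∑ ω ∈ Finset.univ.filter (fun ω : Fin s → Fin d =>
      ¬ (lossK X k (Finset.image ω Finset.univ) ≤ bound)), ∏ i, p (ω i) ≤ δ by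
    have hsplit := Finset.sum_filter_add_sum_filter_not Finset.univ
      (fun ω : Fin s → Fin d => lossK X k (Finset.image ω Finset.univ) ≤ bound)
      (fun ω => ∏ i, p (ω i))
    have htot' : ∑ ω : Fin s → Fin d, ∏ i, p (ω i) = 1 := DFKVV.sum_prod_p p hq1
    rw [htot'] at hsplit
    linarith
  by_cases hdet : frobSq X ≤ bound
  · have hempty : Finset.univ.filter (fun ω : Fin s → Fin d =>
        ¬ (lossK X k (Finset.image ω Finset.univ) ≤ bound)) = ∅ := by
      apply Finset.filter_eq_empty_iff.mpr
      intro ω _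
      exact not_not_intro ((DFKVV.lossK_le_frobSq X k _).trans hdet)
    rw [hempty, Finset.sum_empty]
    exact hδ0.le
  · push_neg at hdet
    have hcoeff : 2 * W * Real.sqrt ((k : ℝ) / s) < 1 := by
      by_contra hge
      push_neg at hge
      have h1 : frobSq X ≤ 2 * W * Real.sqrt ((k : ℝ) / s) * frobSq X :=
        le_mul_of_one_le_left hF.le hge
      rw [hbound] at hdet
      linarith
    have hk1 : 1 ≤ k := by
      by_contra hk0
      push_neg at hk0
      have hk0' : k = 0 := by omega
      have hFr : frobSq X = ∑ j ∈ Finset.Ico 0 r, σ j ^ 2 := by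
        rw [DFKVV.parseval v hv_orth X]
        rw [Finset.sum_congr rfl fun j (_ : j ∈ Finset.univ) =>
          DFKVV.sq_norm_mulVec X σ v hv_orth hv_eig j]
        rw [Fin.sum_univ_eq_sum_range (fun j => σ j ^ 2) d]
        rw [Finset.range_eq_Ico]
        rw [← Finset.sum_Ico_consecutive (fun j => σ j ^ 2) (Nat.zero_le r) hrd]
        have hz : ∑ j ∈ Finset.Ico r d, σ j ^ 2 = 0 :=
          Finset.sum_eq_zero fun j hj => by
            rw [hσ_zero j (Finset.mem_Ico.mp hj).1]; ring
        rw [hz, add_zero]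
      rw [hbound, hk0'] at hdet
      have hextra0 : 0 ≤ 2 * W * Real.sqrt (((0:ℕ) : ℝ) / s) * frobSq X := by
        apply mul_nonneg (mul_nonneg (by linarith) (Real.sqrt_nonneg _)) hF.le
      linarith
    -- quantitative bounds
    have hs0 : (0:ℝ) < s := by exact_mod_cast hs
    have hks0 : (0:ℝ) < (k : ℝ) / s := div_pos (by exact_mod_cast hk1) hs0
    set x := Real.sqrt ((k : ℝ) / s) with hxdef
    have hx0 : 0 < x := Real.sqrt_pos.mpr hks0
    have hx2 : x ^ 2 = (k : ℝ) / s := Real.sq_sqrt hks0.le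
    have hxW : 2 * W * x < 1 := hcoeff
    have hx_lt : x < 1 / (2 * W) := by
      rw [lt_div_iff₀ (by linarith)]
      linarith
    have hs_gt : 4 * W ^ 2 < (s : ℝ) := by
      have h1 : (1:ℝ) / s ≤ (k : ℝ) / s := by
        gcongr
        exact_mod_cast hk1
      have h2 : (1:ℝ) / s < 1 / (2 * W) ^ 2 := by
        have h3 : x ^ 2 < (1 / (2 * W)) ^ 2 := by
          apply pow_lt_pow_left₀ hx_lt hx0.le
          norm_num
        rw [div_pow, one_pow] at h3
        calc (1:ℝ)/s ≤ (k:ℝ)/s := h1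
          _ = x ^ 2 := hx2.symm
          _ < 1 / (2*W)^2 := h3
      have h4 := (div_lt_div_iff₀ hs0 (by positivity)).mp h2
      nlinarith
    -- the number of groups
    obtain ⟨m, hmdef⟩ : ∃ m' : ℕ, m' = Nat.clog 2 ⌈(1:ℝ)/δ⌉₊ := ⟨_, rfl⟩
    have h1δ : (1:ℝ) < 1 / δ := by rw [lt_div_iff₀ hδ0]; linarith
    have h2ceil : 2 ≤ ⌈(1:ℝ)/δ⌉₊ := by
      have h5 : (1:ℕ) < ⌈(1:ℝ)/δ⌉₊ := Nat.lt_ceil.mpr (by exact_mod_cast h1δ)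
      omega
    have hm1 : 1 ≤ m := by rw [hmdef]; exact Nat.clog_pos one_lt_two h2ceil
    have hmδ : ((1:ℝ)/2) ^ m ≤ δ := by
      have h1 : ((⌈(1:ℝ)/δ⌉₊ : ℝ)) ≤ (2:ℝ) ^ m := by
        rw [hmdef]
        exact_mod_cast Nat.le_pow_clog one_lt_two _
      have h2 : (1:ℝ)/δ ≤ (2:ℝ) ^ m := le_trans (Nat.le_ceil _) h1
      rw [div_le_iff₀ hδ0] at h2
      rw [div_pow, one_pow, div_le_iff₀ (by positivity : (0:ℝ) < (2:ℝ)^m)]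
      nlinarith
    have hm_ub : (m : ℝ) ≤ L / Real.log 2 + 1 := by
      have hpow : 2 ^ (m - 1) < ⌈(1:ℝ)/δ⌉₊ := by
        rw [hmdef]
        exact Nat.pow_pred_clog_lt_self one_lt_two (by omega)
      have hceil_lt : ((⌈(1:ℝ)/δ⌉₊ : ℕ) : ℝ) < 1/δ + 1 := Nat.ceil_lt_add_one (by positivity)
      have h3 : ((2:ℝ)) ^ (m - 1 : ℕ) < 2 / δ := by
        have h6 : (((2:ℕ) ^ (m-1) : ℕ) : ℝ) < ((⌈(1:ℝ)/δ⌉₊ : ℕ) : ℝ) := by exact_mod_cast hpow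
        push_cast at h6
        have h7 : (2:ℝ)/δ = 1/δ + 1/δ := by ring
        linarith
      have h4 : ((m:ℝ) - 1) * Real.log 2 < L := by
        have h8 := Real.log_lt_log (by positivity) h3
        rw [Real.log_pow] at h8
        have hc : ((m - 1 : ℕ) : ℝ) = (m : ℝ) - 1 := by
          push_cast [Nat.cast_sub hm1]
          ring
        rw [hc] at h8
        exact h8
      have hlog2pos : (0:ℝ) < Real.log 2 := by linarith
      have h9 : (m:ℝ) - 1 ≤ L / Real.log 2 := by
        rw [le_div_iff₀ hlog2pos]; linarith
      linarith
    have hmW : (m : ℝ) ≤ W ^ 2 := by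
      have h8 : L / Real.log 2 ≤ 8 * L := by
        rw [div_le_iff₀ (by linarith)]
        nlinarith [hL0.le]
      nlinarith [Real.sqrt_nonneg (8 * L)]
    have hm_lt_s : m < s := by
      have h10 : (m:ℝ) < (s:ℝ) := by
        nlinarith [Real.sqrt_nonneg (8 * L), hL0.le]
      exact_mod_cast h10
    obtain ⟨n, hndef⟩ : ∃ n' : ℕ, n' = s / m := ⟨_, rfl⟩
    have hm0 : 0 < m := hm1
    have hn1 : 1 ≤ n := by rw [hndef]; exact (Nat.one_le_div_iff hm0).mpr hm_lt_s.le
    obtain ⟨l, hldef⟩ : ∃ l' : ℕ, l' = s % m := ⟨_, rfl⟩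
    have hsum : m * n + l = s := by rw [hndef, hldef]; exact Nat.div_add_mod s m
    have hl_lt : l < m := by rw [hldef]; exact Nat.mod_lt s hm0
    have hn0 : (0:ℝ) < n := by exact_mod_cast hn1
    have hm0' : (0:ℝ) < m := by exact_mod_cast hm0
    have hs2mn : (s:ℝ) < 2 * m * n := by
      have hseq : (s:ℝ) = m * n + l := by exact_mod_cast hsum.symm
      have hl : (l:ℝ) < m := by exact_mod_cast hl_lt
      nlinarith
    set c := 2 * ((k:ℝ) * frobSq X / n) with hcdef
    have hkpos : (0:ℝ) < k := by exact_mod_cast hk1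
    have hkF : (0:ℝ) < (k:ℝ) * frobSq X / n := div_pos (mul_pos hkpos hF) hn0
    have hc0 : 0 < c := by rw [hcdef]; linarith
    have harith : c ≤ 2 * W * x * frobSq X := by
      have h1 : (k:ℝ)/n ≤ 2 * (m:ℝ) * (k:ℝ) / s := by
        rw [div_le_div_iff₀ hn0 hs0]
        nlinarith [hkpos.le]
      have h2 : 2 * (m:ℝ) * (k:ℝ) / s ≤ W * x := by
        have h11 : 2 * (m:ℝ) * (k:ℝ) / s = 2 * m * x ^ 2 := by
          rw [mul_div_assoc, ← hx2]
        rw [h11]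
        have h2mx : 2 * (m:ℝ) * x ≤ W := by nlinarith
        nlinarith [hx0.le]
      calc c = 2 * ((k:ℝ)/n) * frobSq X := by rw [hcdef]; ring
        _ ≤ 2 * (W * x) * frobSq X := by
            apply mul_le_mul_of_nonneg_right _ hF.le
            have h12 := le_trans h1 h2
            linarith
        _ = 2 * W * x * frobSq X := by ring
    -- block structure
    set e : Fin s ≃ (Fin m × Fin n) ⊕ Fin l :=
      ((Equiv.sumCongr finProdFinEquiv (Equiv.refl (Fin l))).trans
        ((finSumFinEquiv).trans (finCongr hsum))).symm with hedef
    set H : (Fin n → Fin d) → ℝ := fun α => if devG X p v k α ≤ c then 0 else 1 with hHdef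
    set θ := ∑ α ∈ Finset.univ.filter (fun α : Fin n → Fin d => ¬ devG X p v k α ≤ c),
      ∏ t, p (α t) with hθdef
    have hθ0 : 0 ≤ θ :=
      Finset.sum_nonneg fun α _ => Finset.prod_nonneg fun t _ => hp0 _
    have hθhalf : θ ≤ 1/2 := by
      have hmar := DFKVV.markov (fun α : Fin n → Fin d => ∏ t, p (α t)) (devG X p v k)
        (fun α => Finset.prod_nonneg fun t _ => hp0 _) (devG_nonneg X p v k) hc0
      have hexp := DFKVV.exp_devG (by omega : 0 < n) X k p v hv_orth hF hp hkd
      calc θ ≤ (∑ α : Fin n → Fin d, (∏ t, p (α t)) * devG X p v k α) / c := hmar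
        _ ≤ ((k:ℝ) * frobSq X / n) / c := by
            exact div_le_div_of_nonneg_right hexp hc0.le
        _ = 1/2 := by
            rw [hcdef]
            field_simp
    have hHsum : ∑ α : Fin n → Fin d, (∏ t, p (α t)) * H α = θ := by
      rw [hθdef, Finset.sum_filter]
      refine Finset.sum_congr rfl fun α _ => ?_
      simp only [hHdef]
      by_cases hα : devG X p v k α ≤ c
      · simp [hα]
      · simp [hα]
    have hfact := DFKVV.indep_blocks p hq1 e H
    rw [hHsum] at hfact
    have hblk : ∀ (ω : Fin s → Fin d) (g : Fin m),
        lossK X k (Finset.image ω Finset.univ)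
          ≤ (∑ j ∈ Finset.Ico k r, σ j ^ 2)
            + devG X p v k (fun t => ω (e.symm (Sum.inl (g, t)))) := by
      intro ω g
      exact DFKVV.loss_le_tail_add_devG X k r σ v p hv_orth hv_eig hσ_zero hkd hrd hk ω
        (fun t => e.symm (Sum.inl (g, t)))
    have hsubset : Finset.univ.filter (fun ω : Fin s → Fin d =>
          ¬ (lossK X k (Finset.image ω Finset.univ) ≤ bound))
        ⊆ Finset.univ.filter (fun ω : Fin s → Fin d =>
          ∀ g : Fin m, ¬ devG X p v k (fun t => ω (e.symm (Sum.inl (g, t)))) ≤ c) := by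
      intro ω hω
      rw [Finset.mem_filter] at hω ⊢
      refine ⟨Finset.mem_univ _, ?_⟩
      intro g hg
      apply hω.2
      calc lossK X k (Finset.image ω Finset.univ)
          ≤ (∑ j ∈ Finset.Ico k r, σ j ^ 2)
              + devG X p v k (fun t => ω (e.symm (Sum.inl (g, t)))) := hblk ω g
        _ ≤ (∑ j ∈ Finset.Ico k r, σ j ^ 2) + c := by linarith
        _ ≤ bound := by rw [hbound]; linarith [harith]
    calc ∑ ω ∈ Finset.univ.filter (fun ω : Fin s → Fin d =>
            ¬ (lossK X k (Finset.image ω Finset.univ) ≤ bound)), ∏ i, p (ω i)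
        ≤ ∑ ω ∈ Finset.univ.filter (fun ω : Fin s → Fin d =>
            ∀ g : Fin m, ¬ devG X p v k (fun t => ω (e.symm (Sum.inl (g, t)))) ≤ c),
            ∏ i, p (ω i) := by
          apply Finset.sum_le_sum_of_subset_of_nonneg hsubset
          intro ω _ _
          exact Finset.prod_nonneg fun i _ => hp0 _
      _ ≤ ∑ ω : Fin s → Fin d, (∏ i, p (ω i))
            * ∏ g : Fin m, H (fun t => ω (e.symm (Sum.inl (g, t)))) := by
          rw [Finset.sum_filter]
          apply Finset.sum_le_sum
          intro ω _
          by_cases hall : ∀ g : Fin m,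
              ¬ devG X p v k (fun t => ω (e.symm (Sum.inl (g, t)))) ≤ c
          · rw [if_pos hall]
            have hone : ∏ g : Fin m, H (fun t => ω (e.symm (Sum.inl (g, t)))) = 1 :=
              Finset.prod_eq_one fun g _ => by simp only [hHdef]; exact if_neg (hall g)
            rw [hone, mul_one]
          · rw [if_neg hall]
            apply mul_nonneg (Finset.prod_nonneg fun i _ => hp0 _)
            apply Finset.prod_nonneg
            intro g _
            simp only [hHdef]
            split_ifs <;> norm_num
      _ = θ ^ m := hfact
      _ ≤ (1/2) ^ m := pow_le_pow_left₀ hθ0 hθhalf m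
      _ ≤ δ := hmδ

end
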